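/- For the linear-growth generator of the paper: if b satisfies the directional linear growth |⟨b(x),u⟩| ≤ μ|⟨x,u⟩| for all unit u, and the dispersion matrix a = σσ^T satisfies Σ_{j=1}^k ⟨a y_j, y_j⟩ ≥ 3⟨a Ĝ, Ĝ⟩ pointwise, then the elliptic operator A g(x) = ⟨b(x),∇g(x)⟩ + ½ Tr(a(x)Hess(g)(x)) applied to H(x) = (1+|G(x)|²)^{-1/2} satisfies A H ≤ μ H on ℝ^d. -/

import Mathlib

open RealInnerProductSpace

set_option maxHeartbeats 1000000 in
/-- Proposition `generator_bound` of the paper: if the drift `b` satisfies the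
directional linear growth `|⟨b x, u⟩| ≤ μ |⟨x, u⟩|` for all unit `u`, and the
symmetric positive semidefinite dispersion `a = σσᵀ` satisfies
`∑ⱼ ⟨a yⱼ, yⱼ⟩ ≥ 3 ⟨a Ĝ, Ĝ⟩` pointwise, then the elliptic operator
`A g x = ⟨b x, ∇g x⟩ + ½ Tr (a x · Hess g x)` applied to
`H x = (1+|G x|²)^{-1/2}` satisfies `A H ≤ μ H` on `ℝ^d`.  The trace of
`a x · Hess H x` is computed as `∑ᵢ Hess H x (a x eᵢ, eᵢ)` over the standard
orthonormal basis, using the second derivative as a bilinear form. -/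
theorem generator_bound (d k : ℕ) (μ : ℝ) (hμ : 0 < μ)
    (y : Fin k → EuclideanSpace ℝ (Fin d)) (hy : Orthonormal ℝ y)
    (b : EuclideanSpace ℝ (Fin d) → EuclideanSpace ℝ (Fin d))
    (hb : ∀ x u : EuclideanSpace ℝ (Fin d), ‖u‖ = 1 → |⟪b x, u⟫| ≤ μ * |⟪x, u⟫|)
    (a : EuclideanSpace ℝ (Fin d) →
      (EuclideanSpace ℝ (Fin d) →L[ℝ] EuclideanSpace ℝ (Fin d)))
    (hsymm : ∀ x u v, ⟪a x u, v⟫ = ⟪u, a x v⟫)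
    (hpsd : ∀ x v, 0 ≤ ⟪a x v, v⟫)
    (G : EuclideanSpace ℝ (Fin d) → EuclideanSpace ℝ (Fin d))
    (hG : ∀ x, G x = ∑ j, ⟪y j, x⟫ • y j)
    (H : EuclideanSpace ℝ (Fin d) → ℝ)
    (hH : ∀ x, H x = (1 + ‖G x‖ ^ 2) ^ (-(1 / 2) : ℝ))
    (Ghat : EuclideanSpace ℝ (Fin d) → EuclideanSpace ℝ (Fin d))
    (hGhat : ∀ x, Ghat x = H x • G x)
    (hbal : ∀ x, 3 * ⟪a x (Ghat x), Ghat x⟫ ≤ ∑ j, ⟪a x (y j), y j⟫) :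
    ∀ x, ⟪b x, gradient H x⟫
        + (1 / 2) * ∑ i, fderiv ℝ (fun z => fderiv ℝ H z) x
            (a x (EuclideanSpace.basisFun (Fin d) ℝ i))
            (EuclideanSpace.basisFun (Fin d) ℝ i)
      ≤ μ * H x := by
  classical
  -- the projection as a continuous linear map
  set P : EuclideanSpace ℝ (Fin d) →L[ℝ] EuclideanSpace ℝ (Fin d) :=
    ∑ j, (innerSL ℝ (y j)).smulRight (y j) with hPdef
  have hPapp : ∀ z, P z = ∑ j, ⟪y j, z⟫ • y j := by
    intro z
    simp [hPdef, ContinuousLinearMap.sum_apply]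
  have hPG : ∀ z, G z = P z := fun z => by rw [hG, hPapp]
  have hyj : ∀ i j : Fin k, ⟪y i, y j⟫ = if i = j then (1 : ℝ) else 0 :=
    orthonormal_iff_ite.mp hy
  have hPy : ∀ (j : Fin k) (v : EuclideanSpace ℝ (Fin d)), ⟪y j, P v⟫ = ⟪y j, v⟫ := by
    intro j v
    rw [hPapp, inner_sum]
    simp only [real_inner_smul_right]
    rw [Finset.sum_congr rfl (fun i _ => by rw [hyj j i])]
    simp
  have hPv : ∀ u v : EuclideanSpace ℝ (Fin d), ⟪P u, v⟫ = ∑ j, ⟪y j, u⟫ * ⟪y j, v⟫ := by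
    intro u v
    rw [hPapp, sum_inner]
    exact Finset.sum_congr rfl fun j _ => real_inner_smul_left _ _ _
  have hP : ∀ u v : EuclideanSpace ℝ (Fin d), ⟪P u, P v⟫ = ⟪P u, v⟫ := by
    intro u v
    rw [hPv u (P v), hPv u v]
    exact Finset.sum_congr rfl fun j _ => by rw [hPy j v]
  -- quadratic form
  set Q : EuclideanSpace ℝ (Fin d) → ℝ := fun z => 1 + ⟪P z, P z⟫ with hQdef
  have hQpos : ∀ z, 0 < Q z := by
    intro z
    have := real_inner_self_nonneg (x := P z)
    simp only [hQdef]
    linarith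
  have hQnorm : ∀ z, Q z = 1 + ‖P z‖ ^ 2 := by
    intro z
    show 1 + ⟪P z, P z⟫ = 1 + ‖P z‖ ^ 2
    rw [real_inner_self_eq_norm_sq]
  have hHeq : H = fun z => (Q z) ^ (-(1 / 2) : ℝ) := by
    funext z
    rw [hH z, hPG z, hQnorm]
  -- derivative of Q
  have hq : ∀ z, HasFDerivAt Q ((2 : ℝ) • ((innerSL ℝ (P z)).comp P)) z := by
    intro z
    have h1 := (hasFDerivAt_const (1 : ℝ) z).add
      ((P.hasFDerivAt (x := z)).inner ℝ (P.hasFDerivAt (x := z)))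
    refine h1.congr_fderiv ?_
    ext v
    simp only [ContinuousLinearMap.smul_apply, ContinuousLinearMap.comp_apply,
      innerSL_apply_apply, smul_eq_mul, ContinuousLinearMap.add_apply,
      ContinuousLinearMap.zero_apply, fderivInnerCLM_apply,
      ContinuousLinearMap.prod_apply, zero_add]
    rw [real_inner_comm (P v) (P z)]
    ring
  -- first derivative of H
  have hΦ : ∀ z, HasFDerivAt H ((-(Q z) ^ (-(3 / 2) : ℝ)) • innerSL ℝ (P z)) z := by
    intro z
    rw [hHeq]
    have h2 := (hq z).rpow_const (p := (-(1 / 2) : ℝ)) (Or.inl (hQpos z).ne')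
    refine h2.congr_fderiv ?_
    ext v
    simp only [ContinuousLinearMap.smul_apply, ContinuousLinearMap.comp_apply,
      innerSL_apply_apply, smul_eq_mul]
    rw [hP z v, show (-(1 / 2) - 1 : ℝ) = -(3 / 2) by norm_num]
    ring
  -- gradient of H
  have hgrad : ∀ z, gradient H z = (-(Q z) ^ (-(3 / 2) : ℝ)) • P z := by
    intro z
    apply HasGradientAt.gradient
    rw [hasGradientAt_iff_hasFDerivAt]
    refine (hΦ z).congr_fderiv ?_
    ext v
    simp only [InnerProductSpace.toDual_apply_apply, ContinuousLinearMap.smul_apply,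
      innerSL_apply_apply, smul_eq_mul]
    rw [real_inner_smul_left]
  -- the map z ↦ innerSL (P z) is itself a continuous linear map
  set T : EuclideanSpace ℝ (Fin d) →L[ℝ] (EuclideanSpace ℝ (Fin d) →L[ℝ] ℝ) :=
    (innerSL ℝ).comp P with hTdef
  have hTapp : ∀ z, T z = innerSL ℝ (P z) := fun z => rfl
  set f : EuclideanSpace ℝ (Fin d) → ℝ := fun z => -(Q z) ^ (-(3 / 2) : ℝ) with hfdef
  have hf : ∀ z, HasFDerivAt f
      ((3 * (Q z) ^ (-(5 / 2) : ℝ)) • ((innerSL ℝ (P z)).comp P)) z := by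
    intro z
    have h3 := ((hq z).rpow_const (p := (-(3 / 2) : ℝ)) (Or.inl (hQpos z).ne')).neg
    refine h3.congr_fderiv ?_
    ext v
    simp only [ContinuousLinearMap.smul_apply, ContinuousLinearMap.comp_apply,
      innerSL_apply_apply, smul_eq_mul, ContinuousLinearMap.neg_apply]
    rw [show (-(3 / 2) - 1 : ℝ) = -(5 / 2) by norm_num]
    ring
  have hfd : (fun z => fderiv ℝ H z) = fun z => f z • T z := by
    funext z
    rw [(hΦ z).fderiv, hTapp]
  intro x
  have hΨ : HasFDerivAt (fun z => fderiv ℝ H z)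
      (f x • T + ((3 * (Q x) ^ (-(5 / 2) : ℝ)) • ((innerSL ℝ (P x)).comp P)).smulRight (T x))
      x := by
    rw [hfd]
    exact (hf x).smul T.hasFDerivAt
  have heval : ∀ u v : EuclideanSpace ℝ (Fin d),
      fderiv ℝ (fun z => fderiv ℝ H z) x u v
        = f x * ⟪P u, v⟫ + 3 * (Q x) ^ (-(5 / 2) : ℝ) * (⟪P x, P u⟫ * ⟪P x, v⟫) := by
    intro u v
    rw [hΨ.fderiv]
    simp only [ContinuousLinearMap.add_apply, ContinuousLinearMap.smul_apply,
      ContinuousLinearMap.smulRight_apply, ContinuousLinearMap.comp_apply,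
      innerSL_apply_apply, smul_eq_mul, hTapp]
    ring
  -- Parseval identity for the standard basis
  have hpars : ∀ u v : EuclideanSpace ℝ (Fin d),
      ∑ i, ⟪u, (EuclideanSpace.basisFun (Fin d) ℝ) i⟫ * ⟪v, (EuclideanSpace.basisFun (Fin d) ℝ) i⟫
        = ⟪u, v⟫ := by
    intro u v
    rw [← (EuclideanSpace.basisFun (Fin d) ℝ).sum_inner_mul_inner u v]
    exact Finset.sum_congr rfl fun i _ => by rw [real_inner_comm v _]
  set e := EuclideanSpace.basisFun (Fin d) ℝ with hedef
  have hsumA : ∑ i, ⟪P x, P (a x (e i))⟫ * ⟪P x, e i⟫ = ⟪a x (P x), P x⟫ := by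
    rw [← hpars (a x (P x)) (P x)]
    refine Finset.sum_congr rfl fun i _ => ?_
    rw [hP x (a x (e i)), ← hsymm x (P x) (e i)]
  have hsumB : ∑ i, ⟪P (a x (e i)), e i⟫ = ∑ j, ⟪a x (y j), y j⟫ := by
    have h1 : ∀ i : Fin d, ⟪P (a x (e i)), e i⟫ = ∑ j, ⟪a x (y j), e i⟫ * ⟪y j, e i⟫ := by
      intro i
      rw [hPv]
      exact Finset.sum_congr rfl fun j _ => by rw [hsymm x (y j) (e i)]
    rw [Finset.sum_congr rfl fun i _ => h1 i, Finset.sum_comm]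
    exact Finset.sum_congr rfl fun j _ => hpars (a x (y j)) (y j)
  -- value of the trace term
  have htr : ∑ i, fderiv ℝ (fun z => fderiv ℝ H z) x (a x (e i)) (e i)
      = f x * (∑ j, ⟪a x (y j), y j⟫)
        + 3 * (Q x) ^ (-(5 / 2) : ℝ) * ⟪a x (P x), P x⟫ := by
    rw [Finset.sum_congr rfl fun i _ => heval (a x (e i)) (e i)]
    rw [Finset.sum_add_distrib, ← Finset.mul_sum, ← Finset.mul_sum, hsumA, hsumB]
  -- drift bound
  have hbP : |⟪b x, P x⟫| ≤ μ * ‖P x‖ ^ 2 := by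
    by_cases hPx : P x = 0
    · simp [hPx]
    · have hn : (0 : ℝ) < ‖P x‖ := norm_pos_iff.mpr hPx
      have hu : ‖(‖P x‖⁻¹ • P x : EuclideanSpace ℝ (Fin d))‖ = 1 := by
        rw [norm_smul, norm_inv, norm_norm, inv_mul_cancel₀ hn.ne']
      have h := hb x _ hu
      rw [real_inner_smul_right, real_inner_smul_right, abs_mul, abs_mul,
        abs_of_pos (inv_pos.mpr hn)] at h
      have h2 : |⟪b x, P x⟫| ≤ μ * |⟪x, P x⟫| := by
        have h3 := mul_le_mul_of_nonneg_left h hn.le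
        calc |⟪b x, P x⟫| = ‖P x‖ * (‖P x‖⁻¹ * |⟪b x, P x⟫|) := by field_simp
        _ ≤ ‖P x‖ * (μ * (‖P x‖⁻¹ * |⟪x, P x⟫|)) := h3
        _ = μ * |⟪x, P x⟫| := by field_simp
      have h4 : ⟪x, P x⟫ = ‖P x‖ ^ 2 := by
        rw [real_inner_comm, ← hP x x, real_inner_self_eq_norm_sq]
      rw [h4] at h2
      rwa [abs_of_nonneg (pow_nonneg (norm_nonneg (P x)) 2)] at h2
  -- the balance hypothesis in terms of P
  have hHx : ∀ z, H z = (Q z) ^ (-(1 / 2) : ℝ) := fun z => by rw [hHeq]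
  have hH2 : (H x) ^ 2 = (Q x) ^ (-1 : ℝ) := by
    rw [hHx, ← Real.rpow_natCast ((Q x) ^ (-(1 / 2) : ℝ)) 2, ← Real.rpow_mul (hQpos x).le]
    norm_num
  have hbal' : 3 * ((Q x) ^ (-1 : ℝ) * ⟪a x (P x), P x⟫) ≤ ∑ j, ⟪a x (y j), y j⟫ := by
    have h5 := hbal x
    rw [hGhat x, hPG x] at h5
    rw [← hH2]
    calc 3 * ((H x) ^ 2 * ⟪a x (P x), P x⟫)
        = 3 * ⟪a x (H x • P x), H x • P x⟫ := by
          rw [(a x).map_smul, real_inner_smul_left, real_inner_smul_right]; ring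
      _ ≤ _ := h5
  -- positivity facts
  have hr : (0 : ℝ) ≤ ⟪a x (P x), P x⟫ := hpsd x (P x)
  have hQ32 : (0 : ℝ) < (Q x) ^ (-(3 / 2) : ℝ) := Real.rpow_pos_of_pos (hQpos x) _
  -- trace term is nonpositive
  have htr_le : f x * (∑ j, ⟪a x (y j), y j⟫)
      + 3 * (Q x) ^ (-(5 / 2) : ℝ) * ⟪a x (P x), P x⟫ ≤ 0 := by
    have h6 := mul_le_mul_of_nonneg_left hbal' hQ32.le
    have h7 : (Q x) ^ (-(3 / 2) : ℝ) * (Q x) ^ (-1 : ℝ) = (Q x) ^ (-(5 / 2) : ℝ) := by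
      rw [← Real.rpow_add (hQpos x)]; norm_num
    have h8 : 3 * (Q x) ^ (-(5 / 2) : ℝ) * ⟪a x (P x), P x⟫
        ≤ (Q x) ^ (-(3 / 2) : ℝ) * (∑ j, ⟪a x (y j), y j⟫) := by
      calc 3 * (Q x) ^ (-(5 / 2) : ℝ) * ⟪a x (P x), P x⟫
          = (Q x) ^ (-(3 / 2) : ℝ) * (3 * ((Q x) ^ (-1 : ℝ) * ⟪a x (P x), P x⟫)) := by
            rw [← h7]; ring
        _ ≤ _ := h6
    have h9 : f x = -(Q x) ^ (-(3 / 2) : ℝ) := rfl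
    rw [h9]
    linarith
  -- drift term bound
  have hdrift : ⟪b x, gradient H x⟫ ≤ μ * H x := by
    rw [hgrad x, real_inner_smul_right]
    have h8 : -(Q x) ^ (-(3 / 2) : ℝ) * ⟪b x, P x⟫
        ≤ (Q x) ^ (-(3 / 2) : ℝ) * |⟪b x, P x⟫| := by
      calc -(Q x) ^ (-(3 / 2) : ℝ) * ⟪b x, P x⟫
          = (Q x) ^ (-(3 / 2) : ℝ) * (-⟪b x, P x⟫) := by ring
        _ ≤ (Q x) ^ (-(3 / 2) : ℝ) * |⟪b x, P x⟫| :=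
            mul_le_mul_of_nonneg_left (neg_le_abs _) hQ32.le
    have h9 : (Q x) ^ (-(3 / 2) : ℝ) * |⟪b x, P x⟫| ≤ (Q x) ^ (-(3 / 2) : ℝ) * (μ * ‖P x‖ ^ 2) :=
      mul_le_mul_of_nonneg_left hbP hQ32.le
    have h10 : ‖P x‖ ^ 2 ≤ Q x := by rw [hQnorm x]; linarith
    have h11 : (Q x) ^ (-(3 / 2) : ℝ) * Q x = (Q x) ^ (-(1 / 2) : ℝ) := by
      rw [← Real.rpow_add_one (hQpos x).ne']; norm_num
    have h12 : (Q x) ^ (-(3 / 2) : ℝ) * (μ * ‖P x‖ ^ 2) ≤ μ * (Q x) ^ (-(1 / 2) : ℝ) := by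
      calc (Q x) ^ (-(3 / 2) : ℝ) * (μ * ‖P x‖ ^ 2)
          = μ * ((Q x) ^ (-(3 / 2) : ℝ) * ‖P x‖ ^ 2) := by ring
        _ ≤ μ * ((Q x) ^ (-(3 / 2) : ℝ) * Q x) :=
            mul_le_mul_of_nonneg_left (mul_le_mul_of_nonneg_left h10 hQ32.le) hμ.le
        _ = μ * (Q x) ^ (-(1 / 2) : ℝ) := by rw [h11]
    rw [hHx x]
    linarith
  rw [htr]
  linarith
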